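/- Let M be an R × C matrix over the rationals all of whose entries are 0 or 1, and suppose M has rank n over the rationals. Then there exist a positive integer k, an R × n matrix X with integer entries all equal to 0 or 1, and an n × C matrix Y with integer entries, such that k·M = X · Y (as matrices over the rationals, under the canonical embedding of the integers into the rationals). -/

import Mathlib

theorem zero_one_matrix_rank_integer_factorization
    (R C n : ℕ) (M : Matrix (Fin R) (Fin C) ℚ)
    (h01 : ∀ i j, M i j = 0 ∨ M i j = 1)
    (hrank : M.rank = n) :
    ∃ (k : ℕ), 0 < k ∧
      ∃ (X : Matrix (Fin R) (Fin n) ℤ) (Y : Matrix (Fin n) (Fin C) ℤ),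
        (∀ i j, X i j = 0 ∨ X i j = 1) ∧
        (k : ℚ) • M = (X * Y).map (Int.cast : ℤ → ℚ) := by
  classical
  set V : Fin C → (Fin R → ℚ) := fun j i => M i j with hV
  have hspan : Module.finrank ℚ (Submodule.span ℚ (Set.range V)) = n := by
    rw [← hrank, Matrix.rank_eq_finrank_span_cols]
    rfl
  obtain ⟨b, hbsub, hbspan, hbind⟩ := exists_linearIndependent ℚ (Set.range V)
  have hbfin : b.Finite := hbind.setFinite
  have : Fintype b := hbfin.fintype
  have hcard : b.toFinset.card = n := by
    have h := finrank_span_set_eq_card hbind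
    rw [hbspan, hspan] at h
    exact h.symm
  obtain ⟨e⟩ : Nonempty (Fin n ≃ b.toFinset) := by
    rw [← hcard]; exact ⟨(b.toFinset.equivFin).symm⟩
  set w : Fin n → (Fin R → ℚ) := fun t => ((e t : b.toFinset) : Fin R → ℚ) with hw
  have hwmem : ∀ t, w t ∈ Set.range V := fun t => hbsub (Set.mem_toFinset.1 (e t).2)
  have hw01 : ∀ t i, w t i = 0 ∨ w t i = 1 := by
    intro t i
    obtain ⟨j, hj⟩ := hwmem t
    rw [← hj]; exact h01 i j
  have hrw : Set.range w = b := by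
    ext x; constructor
    · rintro ⟨t, rfl⟩; exact Set.mem_toFinset.1 (e t).2
    · intro hx
      refine ⟨e.symm ⟨x, Set.mem_toFinset.2 hx⟩, ?_⟩
      simp [hw]
  have hVmem : ∀ j, ∃ c : Fin n → ℚ, ∑ t, c t • w t = V j := by
    intro j
    rw [← Submodule.mem_span_range_iff_exists_fun, hrw, hbspan]
    exact Submodule.subset_span ⟨j, rfl⟩
  choose c hc using hVmem
  set k : ℕ := ∏ j, ∏ t, (c j t).den with hk
  have hkpos : 0 < k := Finset.prod_pos fun j _ => Finset.prod_pos fun t _ => (c j t).pos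
  have hdvd : ∀ j t, (c j t).den ∣ k := by
    intro j t
    exact dvd_trans (Finset.dvd_prod_of_mem (fun t => (c j t).den) (Finset.mem_univ t))
      (Finset.dvd_prod_of_mem (fun j => ∏ t, (c j t).den) (Finset.mem_univ j))
  refine ⟨k, hkpos, fun i t => if w t i = 1 then 1 else 0,
    fun t j => (k / (c j t).den : ℕ) * (c j t).num, ?_, ?_⟩
  · intro i t; dsimp; split <;> simp
  · ext i j
    have hY : ∀ t, (((k / (c j t).den : ℕ) * (c j t).num : ℤ) : ℚ) = (k : ℚ) * c j t := by
      intro t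
      have hd : ((c j t).den : ℚ) ≠ 0 := Nat.cast_ne_zero.2 (c j t).den_ne_zero
      have hkd : ((k / (c j t).den : ℕ) : ℚ) * ((c j t).den : ℚ) = (k : ℚ) := by
        rw [← Nat.cast_mul, Nat.div_mul_cancel (hdvd j t)]
      have h2 : (k : ℚ) * c j t = ((k / (c j t).den : ℕ) : ℚ) * ((c j t).num : ℚ) := by
        rw [← hkd, mul_assoc, mul_comm ((c j t).den : ℚ), Rat.mul_den_eq_num]
      rw [h2, Int.cast_mul, Int.cast_natCast]
    have hX : ∀ t, ((if w t i = 1 then (1:ℤ) else 0 : ℤ) : ℚ) = w t i := by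
      intro t; rcases hw01 t i with h | h <;> simp [h]
    simp only [Matrix.smul_apply, Matrix.map_apply, Matrix.mul_apply, smul_eq_mul]
    have hM : M i j = ∑ t, c j t * w t i := by
      rw [show M i j = V j i from rfl, ← hc j]; simp
    erw [Matrix.mul_apply]
    rw [hM, Finset.mul_sum, Int.cast_sum]
    refine Finset.sum_congr rfl fun t _ => ?_
    rw [Int.cast_mul, hX t, hY t]; ring
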